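/- Every tree T with maximum degree Δ(T) ≥ 3 and with s leaves contains at least ⌊s/(2Δ(T))⌋ pairwise vertex-disjoint subtrees each of which contains at least three leaves of T. -/

import Mathlib

open Finset SimpleGraph

namespace DTLS

variable {V : Type*} [Fintype V] [DecidableEq V] (G : SimpleGraph V)

/-- The set of vertices `w` such that `v` lies on a geodesic from `r` to `w`. -/
noncomputable def below (r v : V) : Finset V :=
  Finset.univ.filter fun w => G.dist r w = G.dist r v + G.dist v w

variable {G}

lemma mem_below {r v w : V} :
    w ∈ below G r v ↔ G.dist r w = G.dist r v + G.dist v w := by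
  simp [below]

lemma self_mem_below (r v : V) : v ∈ below G r v := by
  simp [mem_below]

lemma below_root (r : V) : below G r r = Finset.univ := by
  ext w; simp [mem_below]

lemma below_closed (hc : G.Connected) {r v w x : V} (hw : w ∈ below G r v)
    (hx : x ∈ below G r w) : x ∈ below G r v := by
  rw [mem_below] at *
  have h1 : G.dist v x ≤ G.dist v w + G.dist w x := hc.dist_triangle
  have h2 : G.dist r x ≤ G.dist r v + G.dist v x := hc.dist_triangle
  omega

lemma dist_add_of_mem_support (hc : G.Connected) {v w x : V} (p : G.Walk v w)
    (hp : p.length = G.dist v w) (hx : x ∈ p.support) :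
    G.dist v w = G.dist v x + G.dist x w := by
  have h1 := SimpleGraph.dist_le (p.takeUntil x hx)
  have h2 := SimpleGraph.dist_le (p.dropUntil x hx)
  have h3 : (p.takeUntil x hx).length + (p.dropUntil x hx).length = p.length := by
    rw [← SimpleGraph.Walk.length_append, SimpleGraph.Walk.take_spec]
  have h4 : G.dist v w ≤ G.dist v x + G.dist x w := hc.dist_triangle
  omega

lemma mem_below_of_support (hc : G.Connected) {r v w x : V}
    (hw : w ∈ below G r v) (p : G.Walk v w) (hp : p.length = G.dist v w)
    (hx : x ∈ p.support) : x ∈ below G r v ∧ w ∈ below G r x := by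
  rw [mem_below] at hw
  have hsplit := dist_add_of_mem_support hc p hp hx
  have t1 : G.dist r x ≤ G.dist r v + G.dist v x := hc.dist_triangle
  have t2 : G.dist r w ≤ G.dist r x + G.dist x w := hc.dist_triangle
  exact ⟨mem_below.mpr (by omega), mem_below.mpr (by omega)⟩

lemma reachable_induce_of_walk {S : Set V} {a b : V} (p : G.Walk a b)
    (hS : ∀ x ∈ p.support, x ∈ S) :
    (G.induce S).Reachable ⟨a, hS a p.start_mem_support⟩ ⟨b, hS b p.end_mem_support⟩ := by
  induction p with
  | nil => rfl
  | @cons a c b h q ih =>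
    have hq : ∀ x ∈ q.support, x ∈ S := fun x hx =>
      hS x (by rw [SimpleGraph.Walk.support_cons]; exact List.mem_cons_of_mem _ hx)
    have hadj : (G.induce S).Adj ⟨a, hS a (SimpleGraph.Walk.start_mem_support _)⟩
        ⟨c, hq c q.start_mem_support⟩ := by
      simp only [comap_adj, Function.Embedding.coe_subtype]
      exact h
    exact (hadj.reachable).trans (ih hq)

lemma exists_child (hc : G.Connected) {r v x : V} (hx : x ∈ below G r v)
    (hxv : x ≠ v) :
    ∃ w, G.Adj v w ∧ G.dist r w = G.dist r v + 1 ∧ x ∈ below G r w := by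
  obtain ⟨p, hp⟩ := hc.exists_walk_length_eq_dist v x
  cases p with
  | nil => exact absurd rfl hxv.symm
  | @cons _ w _ h q =>
    have hlen : q.length + 1 = G.dist v x := by
      simpa [SimpleGraph.Walk.length_cons] using hp
    have hq : G.dist w x ≤ q.length := SimpleGraph.dist_le q
    have hvw : G.dist v w = 1 := SimpleGraph.dist_eq_one_iff_adj.mpr h
    have trig : G.dist v x ≤ G.dist v w + G.dist w x := hc.dist_triangle
    have hxb := mem_below.mp hx
    have t1 : G.dist r w ≤ G.dist r v + G.dist v w := hc.dist_triangle
    have t2 : G.dist r x ≤ G.dist r w + G.dist w x := hc.dist_triangle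
    exact ⟨w, h, by omega, mem_below.mpr (by omega)⟩

lemma counting [DecidableRel G.Adj] (hc : G.Connected) {r v : V}
    (hr : G.degree r = G.maxDegree) (hΔ : 3 ≤ G.maxDegree)
    (M : Finset V) (hM : ∀ l ∈ M, G.degree l = 1)
    (hv3 : 3 ≤ (below G r v ∩ M).card)
    (hvmax : ∀ u, 3 ≤ (below G r u ∩ M).card → G.dist r u ≤ G.dist r v) :
    (below G r v ∩ M).card ≤ 2 * G.maxDegree := by
  classical
  -- v is not itself a marked leaf
  have hvM : v ∉ M := by
    intro hvM
    have hdeg : G.degree v = 1 := hM v hvM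
    have hvr : v ≠ r := by
      intro h; rw [h, hr] at hdeg; omega
    -- find the unique neighbor, which is towards r
    obtain ⟨p, hp⟩ := hc.exists_walk_length_eq_dist v r
    cases p with
    | nil => exact hvr rfl
    | @cons _ u _ h q =>
      have hlen : q.length + 1 = G.dist v r := by
        simpa [SimpleGraph.Walk.length_cons] using hp
      have hq : G.dist u r ≤ q.length := SimpleGraph.dist_le q
      have hvu : G.dist v u = 1 := SimpleGraph.dist_eq_one_iff_adj.mpr h
      have trig : G.dist v r ≤ G.dist v u + G.dist u r := hc.dist_triangle
      have hur : G.dist u r + 1 = G.dist v r := by omega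
      -- no child exists
      have hnochild : ∀ w, G.Adj v w → G.dist r w ≠ G.dist r v + 1 := by
        intro w hw hwd
        have hwn : w ∈ G.neighborFinset v := (mem_neighborFinset _ _ _).mpr hw
        have hun : u ∈ G.neighborFinset v := (mem_neighborFinset _ _ _).mpr h
        have h1 : (G.neighborFinset v).card = 1 := by
          rw [card_neighborFinset_eq_degree]; exact hdeg
        have : w = u := by
          obtain ⟨a, ha⟩ := Finset.card_eq_one.mp h1
          rw [ha, Finset.mem_singleton] at hwn hun
          rw [hwn, hun]
        rw [this] at hwd
        have h2 : G.dist r u = G.dist u r := SimpleGraph.dist_comm ..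
        have h3 : G.dist r v = G.dist v r := SimpleGraph.dist_comm ..
        omega
      -- hence below v ∩ M ⊆ {v}
      have hsub : below G r v ∩ M ⊆ {v} := by
        intro x hx
        rw [Finset.mem_inter] at hx
        rw [Finset.mem_singleton]
        by_contra hne
        obtain ⟨w, hw1, hw2, _⟩ := exists_child hc hx.1 hne
        exact hnochild w hw1 hw2
      have := Finset.card_le_card hsub
      simp at this
      omega
  -- children of v
  set C := (G.neighborFinset v).filter (fun w => G.dist r w = G.dist r v + 1) with hC
  have hcover : below G r v ∩ M ⊆ C.biUnion (fun w => below G r w ∩ M) := by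
    intro x hx
    rw [Finset.mem_inter] at hx
    have hxv : x ≠ v := by rintro rfl; exact hvM hx.2
    obtain ⟨w, hw1, hw2, hw3⟩ := exists_child hc hx.1 hxv
    refine Finset.mem_biUnion.mpr ⟨w, ?_, Finset.mem_inter.mpr ⟨hw3, hx.2⟩⟩
    rw [hC, Finset.mem_filter, mem_neighborFinset]
    exact ⟨hw1, hw2⟩
  have hchild : ∀ w ∈ C, (below G r w ∩ M).card ≤ 2 := by
    intro w hw
    rw [hC, Finset.mem_filter] at hw
    by_contra hcon
    have h3 : 3 ≤ (below G r w ∩ M).card := by omega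
    have := hvmax w h3
    omega
  calc (below G r v ∩ M).card ≤ (C.biUnion (fun w => below G r w ∩ M)).card :=
        Finset.card_le_card hcover
    _ ≤ ∑ w ∈ C, (below G r w ∩ M).card := Finset.card_biUnion_le
    _ ≤ ∑ _w ∈ C, 2 := Finset.sum_le_sum hchild
    _ = 2 * C.card := by rw [Finset.sum_const]; ring
    _ ≤ 2 * G.degree v := by
        have : C.card ≤ (G.neighborFinset v).card := Finset.card_filter_le _ _
        rw [card_neighborFinset_eq_degree] at this
        omega
    _ ≤ 2 * G.maxDegree := by
        have := G.degree_le_maxDegree v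
        omega

lemma below_sdiff_connected (hc : G.Connected) {r v : V} (U : Finset V)
    (hU : ∀ w ∈ U, ∀ x ∈ below G r w, x ∈ U) (hv : v ∉ U) :
    (G.induce (((below G r v \ U : Finset V) : Set V))).Connected := by
  set S := below G r v \ U with hS
  have hvS : v ∈ S := Finset.mem_sdiff.mpr ⟨self_mem_below r v, hv⟩
  have key : ∀ x (hx : x ∈ S), (G.induce (S : Set V)).Reachable
      ⟨v, by simpa using hvS⟩ ⟨x, by simpa using hx⟩ := by
    intro x hx
    rw [hS, Finset.mem_sdiff] at hx
    obtain ⟨p, hp⟩ := hc.exists_walk_length_eq_dist v x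
    have hsup : ∀ y ∈ p.support, y ∈ (S : Set V) := by
      intro y hy
      obtain ⟨hy1, hy2⟩ := mem_below_of_support hc hx.1 p hp hy
      have hyU : y ∉ U := fun hyU => hx.2 (hU y hyU x hy2)
      simpa [hS] using Finset.mem_sdiff.mpr ⟨hy1, hyU⟩
    exact reachable_induce_of_walk p hsup
  rw [connected_iff]
  constructor
  · intro a b
    exact ((key a.1 (by simpa using a.2)).symm.trans (key b.1 (by simpa using b.2)))
  · exact ⟨⟨v, by simpa using hvS⟩⟩

lemma main [DecidableRel G.Adj] (hc : G.Connected) {r : V}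
    (hr : G.degree r = G.maxDegree) (hΔ : 3 ≤ G.maxDegree)
    (L : Finset V) (hL : ∀ l ∈ L, G.degree l = 1) :
    ∀ k (U : Finset V), (∀ w ∈ U, ∀ x ∈ below G r w, x ∈ U) →
      2 * G.maxDegree * k ≤ (L \ U).card →
      ∃ S : Fin k → Finset V,
        (∀ i j, i ≠ j → Disjoint (S i) (S j)) ∧
        (∀ i, Disjoint (S i) U) ∧
        (∀ i, (G.induce ((S i : Finset V) : Set V)).Connected) ∧
        (∀ i, 3 ≤ (S i ∩ L).card) := by
  intro k
  induction k with
  | zero =>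
    intro U _ _
    exact ⟨Fin.elim0, fun i => i.elim0, fun i => i.elim0, fun i => i.elim0, fun i => i.elim0⟩
  | succ k ih =>
    intro U hU hcard
    set M := L \ U with hM
    have hML : ∀ l ∈ M, G.degree l = 1 := fun l hl => hL l (Finset.mem_sdiff.mp hl).1
    have hexp : 2 * G.maxDegree * (k + 1) = 2 * G.maxDegree * k + 2 * G.maxDegree := by ring
    have hMcard : 3 ≤ M.card := by omega
    have hrcand : 3 ≤ (below G r r ∩ M).card := by
      rw [below_root, Finset.univ_inter]; omega
    -- choose a deepest candidate
    have hCne : (Finset.univ.filter fun u => 3 ≤ (below G r u ∩ M).card).Nonempty :=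
      ⟨r, Finset.mem_filter.mpr ⟨Finset.mem_univ r, hrcand⟩⟩
    obtain ⟨v, hvC, hvmax⟩ := Finset.exists_max_image _ (fun u => G.dist r u) hCne
    rw [Finset.mem_filter] at hvC
    have hv3 : 3 ≤ (below G r v ∩ M).card := hvC.2
    have hvmax' : ∀ u, 3 ≤ (below G r u ∩ M).card → G.dist r u ≤ G.dist r v := by
      intro u hu
      exact hvmax u (Finset.mem_filter.mpr ⟨Finset.mem_univ u, hu⟩)
    have hbound := counting hc hr hΔ M hML hv3 hvmax'
    -- v is not used already
    have hvU : v ∉ U := by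
      intro hvU
      have : below G r v ∩ M = ∅ := by
        rw [Finset.eq_empty_iff_forall_notMem]
        intro x hx
        rw [Finset.mem_inter] at hx
        exact (Finset.mem_sdiff.mp hx.2).2 (hU v hvU x hx.1)
      rw [this] at hv3; simp at hv3
    set U' := U ∪ below G r v with hU'def
    have hU' : ∀ w ∈ U', ∀ x ∈ below G r w, x ∈ U' := by
      intro w hw x hx
      rw [hU'def, Finset.mem_union] at hw ⊢
      rcases hw with hw | hw
      · exact Or.inl (hU w hw x hx)
      · exact Or.inr (below_closed hc hw hx)
    have hLU' : L \ U' = M \ below G r v := by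
      ext x
      simp only [hU'def, hM, Finset.mem_sdiff, Finset.mem_union]
      tauto
    have hcard' : 2 * G.maxDegree * k ≤ (L \ U').card := by
      rw [hLU']
      have h1 : (M ∩ below G r v).card + (M \ below G r v).card = M.card :=
        Finset.card_inter_add_card_sdiff M (below G r v)
      have h2 : (M ∩ below G r v).card = (below G r v ∩ M).card := by
        rw [Finset.inter_comm]
      omega
    obtain ⟨S', hdisj', hdisjU', hconn', hcard3'⟩ := ih U' hU' hcard'
    set S0 := below G r v \ U with hS0
    have hS0sub : S0 ⊆ U' := by
      intro x hx
      rw [hU'def, Finset.mem_union]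
      exact Or.inr (Finset.mem_sdiff.mp hx).1
    refine ⟨Fin.cons S0 S', ?_, ?_, ?_, ?_⟩
    · intro i j hij
      rcases Fin.eq_zero_or_eq_succ i with rfl | ⟨i', rfl⟩ <;>
        rcases Fin.eq_zero_or_eq_succ j with rfl | ⟨j', rfl⟩
      · exact absurd rfl hij
      · simp only [Fin.cons_zero, Fin.cons_succ]
        exact ((hdisjU' j').mono_right hS0sub).symm
      · simp only [Fin.cons_zero, Fin.cons_succ]
        exact (hdisjU' i').mono_right hS0sub
      · simp only [Fin.cons_succ]
        exact hdisj' i' j' (fun h => hij (congrArg Fin.succ h))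
    · intro i
      rcases Fin.eq_zero_or_eq_succ i with rfl | ⟨i', rfl⟩
      · simp only [Fin.cons_zero, hS0]
        exact Finset.sdiff_disjoint
      · simp only [Fin.cons_succ]
        exact (hdisjU' i').mono_right (by rw [hU'def]; exact Finset.subset_union_left)
    · intro i
      rcases Fin.eq_zero_or_eq_succ i with rfl | ⟨i', rfl⟩
      · exact below_sdiff_connected hc U hU hvU
      · exact hconn' i'
    · intro i
      rcases Fin.eq_zero_or_eq_succ i with rfl | ⟨i', rfl⟩
      · simp only [Fin.cons_zero]
        refine le_trans hv3 (Finset.card_le_card ?_)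
        intro x hx
        rw [Finset.mem_inter] at hx
        obtain ⟨hx1, hx2⟩ := hx
        rw [hM, Finset.mem_sdiff] at hx2
        exact Finset.mem_inter.mpr ⟨Finset.mem_sdiff.mpr ⟨hx1, hx2.2⟩, hx2.1⟩
      · simpa only [Fin.cons_succ] using hcard3' i'

end DTLS

/-- Every tree `T` with maximum degree `Δ(T) ≥ 3` and `s` leaves contains
`⌊s/(2Δ(T))⌋` pairwise disjoint subtrees each containing three leaves of `T`. -/
theorem disjoint_three_leaf_subtrees {V : Type*} [Fintype V] [DecidableEq V]
    (G : SimpleGraph V) [DecidableRel G.Adj] (hT : G.IsTree)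
    (hΔ : 3 ≤ G.maxDegree) (s : ℕ)
    (hs : s = (Finset.univ.filter fun v => G.degree v = 1).card) :
    ∃ S : Fin (s / (2 * G.maxDegree)) → Finset V,
      (∀ i j, i ≠ j → Disjoint (S i) (S j)) ∧
      (∀ i, (G.induce ((S i : Set V))).Connected) ∧
      (∀ i, 3 ≤ ((S i).filter fun v => G.degree v = 1).card) := by
  classical
  have hc : G.Connected := hT.isConnected
  haveI : Nonempty V := hc.nonempty
  obtain ⟨r, hr⟩ := G.exists_maximal_degree_vertex
  set L := Finset.univ.filter (fun v => G.degree v = 1) with hL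
  have hLdeg : ∀ l ∈ L, G.degree l = 1 := by
    intro l hl; rw [hL, Finset.mem_filter] at hl; exact hl.2
  have hstart : 2 * G.maxDegree * (s / (2 * G.maxDegree)) ≤ (L \ ∅).card := by
    rw [Finset.sdiff_empty, ← hs]
    exact Nat.mul_div_le s (2 * G.maxDegree)
  obtain ⟨S, hdisj, _, hconn, hcard⟩ :=
    DTLS.main hc hr.symm hΔ L hLdeg (s / (2 * G.maxDegree)) ∅ (by simp) hstart
  refine ⟨S, hdisj, hconn, ?_⟩
  intro i
  refine le_trans (hcard i) (le_of_eq ?_)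
  congr 1
  ext x
  simp [hL, Finset.mem_inter, Finset.mem_filter, and_comm]
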